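/- Define a : ℕ → ℤ by a(0)=1, a(1)=-1, a(2)=A, and for n ≥ 3, 2·a(n) = -(∑_{k=0}^{n-2} a(k)·C(n-1,k)·2^{n-1-k} + ∑_{k=0}^{n-1} a(k)·C(n,k)·2^{n-k}). Then for all n ≥ 1, ∑_{k=0}^{2n-1} a(k)·C(2n,k)·2^{2n-k} = 0. -/

import Mathlib

open Finset

private def Bb (a : ℕ → ℤ) (i n : ℕ) : ℤ :=
  ∑ j ∈ Finset.range (n+1), a (i+j) * ((n.choose j : ℕ) : ℤ) * 2^(n-j)

private lemma pas (g : ℕ → ℤ) (n : ℕ) :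
    ∑ j ∈ Finset.range (n+2), g j * (((n+1).choose j : ℕ) : ℤ) * 2^(n+1-j)
      = 2 * (∑ j ∈ Finset.range (n+1), g j * ((n.choose j : ℕ) : ℤ) * 2^(n-j))
        + ∑ j ∈ Finset.range (n+1), g (j+1) * ((n.choose j : ℕ) : ℤ) * 2^(n-j) := by
  rw [Finset.sum_range_succ' (fun j => g j * (((n+1).choose j : ℕ) : ℤ) * 2^(n+1-j))]
  have e1 : ∀ j ∈ Finset.range (n+1),
      g (j+1) * (((n+1).choose (j+1) : ℕ) : ℤ) * 2^(n+1-(j+1))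
        = g (j+1) * ((n.choose j : ℕ) : ℤ) * 2^(n-j)
          + g (j+1) * ((n.choose (j+1) : ℕ) : ℤ) * 2^(n-j) := by
    intro j hj
    have h : n+1-(j+1) = n-j := by omega
    rw [h, Nat.choose_succ_succ]
    push_cast
    ring
  rw [Finset.sum_congr rfl e1, Finset.sum_add_distrib]
  have e2 : ∑ j ∈ Finset.range (n+1), g (j+1) * ((n.choose (j+1) : ℕ) : ℤ) * 2^(n-j)
      + g 0 * (((n+1).choose 0 : ℕ) : ℤ) * 2^(n+1-0)
      = 2 * ∑ j ∈ Finset.range (n+1), g j * ((n.choose j : ℕ) : ℤ) * 2^(n-j) := by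
    rw [Finset.sum_range_succ' (fun j => g j * ((n.choose j : ℕ) : ℤ) * 2^(n-j)),
      Finset.sum_range_succ (fun j => g (j+1) * ((n.choose (j+1) : ℕ) : ℤ) * 2^(n-j))]
    rw [Nat.choose_succ_self]
    have e3 : ∀ j ∈ Finset.range n,
        2 * (g (j+1) * ((n.choose (j+1) : ℕ) : ℤ) * 2^(n-(j+1)))
          = g (j+1) * ((n.choose (j+1) : ℕ) : ℤ) * 2^(n-j) := by
      intro j hj
      simp only [Finset.mem_range] at hj
      have h : n - j = (n - (j+1)) + 1 := by omega
      rw [h, pow_succ]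
      ring
    rw [mul_add, Finset.mul_sum, Finset.sum_congr rfl e3]
    simp
    ring
  linarith [e2]

private lemma Bb_succ (a : ℕ → ℤ) (i n : ℕ) :
    Bb a i (n+1) = 2 * Bb a i n + Bb a (i+1) n := by
  unfold Bb
  rw [pas (fun j => a (i+j)) n]
  congr 1
  apply Finset.sum_congr rfl
  intro j hj
  have h : i + (j+1) = (i+1) + j := by omega
  rw [h]

private def ee (a : ℕ → ℤ) (i : ℕ) : ℤ := a i - (-1)^i * Bb a 0 i

private lemma Bb_zero (a : ℕ → ℤ) (i : ℕ) : Bb a i 0 = a i := by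
  simp [Bb]

private lemma Erep (a : ℕ → ℤ) : ∀ n i, Bb a i n - (-1)^(i+n) * Bb a n i
    = ∑ j ∈ Finset.range (n+1), ee a (i+j) * ((n.choose j : ℕ) : ℤ) * 2^(n-j) := by
  intro n
  induction n with
  | zero =>
    intro i
    simp [Bb_zero, ee]
  | succ n ih =>
    intro i
    rw [show n+1+1 = n+2 from rfl, pas (fun j => ee a (i+j)) n]
    have h1 : ∀ j ∈ Finset.range (n+1),
        ee a (i+(j+1)) * ((n.choose j : ℕ) : ℤ) * 2^(n-j)
          = ee a ((i+1)+j) * ((n.choose j : ℕ) : ℤ) * 2^(n-j) := by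
      intro j hj
      have h : i + (j+1) = (i+1) + j := by omega
      rw [h]
    rw [Finset.sum_congr rfl h1, ← ih i, ← ih (i+1)]
    rw [Bb_succ a i n]
    have h2 : Bb a n (i+1) = 2 * Bb a n i + Bb a (n+1) i := Bb_succ a n i
    have h3 : Bb a (n+1) i = Bb a n (i+1) - 2 * Bb a n i := by linarith
    rw [h3]
    have h4 : (-1:ℤ)^(i+(n+1)) = -(-1)^(i+n) := by
      rw [show i+(n+1) = (i+n)+1 from rfl, pow_succ]
      ring
    have h5 : (-1:ℤ)^((i+1)+n) = -(-1)^(i+n) := by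
      rw [show (i+1)+n = (i+n)+1 by omega, pow_succ]
      ring
    rw [h4, h5]
    ring

private lemma diag (a : ℕ → ℤ) (n : ℕ) :
    ∑ j ∈ Finset.range (n+1), ee a (n+j) * ((n.choose j : ℕ) : ℤ) * 2^(n-j) = 0 := by
  rw [← Erep a n n]
  have h : (-1:ℤ)^(n+n) = 1 := Even.neg_one_pow ⟨n, rfl⟩
  rw [h]
  ring

private lemma Bb_eq_S (a : ℕ → ℤ) (m : ℕ) :
    Bb a 0 m = (∑ k ∈ Finset.range m, a k * ((m.choose k : ℕ) : ℤ) * 2^(m-k)) + a m := by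
  unfold Bb
  rw [Finset.sum_range_succ]
  simp

theorem stmt_11 (A : ℤ) (a : ℕ → ℤ)
    (h0 : a 0 = 1) (h1 : a 1 = -1) (h2 : a 2 = A)
    (hrec : ∀ n, 3 ≤ n →
      2 * a n = -((∑ k ∈ Finset.range (n - 1), a k * ((n - 1).choose k : ℤ) * 2 ^ (n - 1 - k)) +
        ∑ k ∈ Finset.range n, a k * (n.choose k : ℤ) * 2 ^ (n - k))) :
    ∀ n, 1 ≤ n →
      ∑ k ∈ Finset.range (2 * n), a k * ((2 * n).choose k : ℤ) * 2 ^ (2 * n - k) = 0 := by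
  -- from the recursion: Bb a 0 n + Bb a 0 (n-1) = a (n-1) - a n for n ≥ 3
  have hB : ∀ m : ℕ, Bb a 0 (m+3) + Bb a 0 (m+2) = a (m+2) - a (m+3) := by
    intro m
    have h := hrec (m+3) (by omega)
    have e1 : m+3-1 = m+2 := by omega
    rw [e1] at h
    have hS2 := Bb_eq_S a (m+2)
    have hS3 := Bb_eq_S a (m+3)
    linarith [hS2, hS3, h]
  -- e vanishes
  have claim : ∀ k, ee a k = 0 := by
    intro k
    induction k using Nat.strong_induction_on with
    | _ k ih =>
      rcases Nat.even_or_odd k with ⟨m, hm⟩ | ⟨m, hm⟩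
      · -- k = m + m : use diagonal identity
        subst hm
        have h := diag a m
        rw [Finset.sum_range_succ] at h
        have hz : ∑ j ∈ Finset.range m, ee a (m+j) * ((m.choose j : ℕ) : ℤ) * 2^(m-j) = 0 := by
          apply Finset.sum_eq_zero
          intro j hj
          simp only [Finset.mem_range] at hj
          rw [ih (m+j) (by omega)]
          ring
        rw [hz] at h
        simpa using h
      · -- k odd
        subst hm
        match m with
        | 0 =>
          -- k = 1
          show a 1 - (-1)^1 * Bb a 0 1 = 0
          have : Bb a 0 1 = 2 * a 0 + a 1 := by
            unfold Bb
            simp [Finset.sum_range_succ]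
            ring
          rw [this, h0, h1]
          ring
        | Nat.succ m =>
          -- k = 2m+3, use hB to get ee k = ee (k-1)
          have hk : 2 * (m+1) + 1 = m + 3 + m := by omega
          rw [hk]
          have hodd : (-1:ℤ)^(m+3+m) = -1 := Odd.neg_one_pow ⟨m+1, by omega⟩
          have heven : (-1:ℤ)^(m+2+m) = 1 := Even.neg_one_pow ⟨m+1, by omega⟩
          have hBm := hB (m+m)
          have e1 : m+m+3 = m+3+m := by omega
          have e2 : m+m+2 = m+2+m := by omega
          rw [e1, e2] at hBm
          have ihprev : ee a (m+2+m) = 0 := ih (m+2+m) (by omega)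
          unfold ee at ihprev ⊢
          rw [hodd]
          rw [heven] at ihprev
          linarith [hBm, ihprev]
  intro n hn
  have h := claim (2*n)
  unfold ee at h
  have heven : (-1:ℤ)^(2*n) = 1 := Even.neg_one_pow ⟨n, by omega⟩
  rw [heven] at h
  have hS := Bb_eq_S a (2*n)
  linarith [h, hS]
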